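/- Let k be a positive integer and X_1,…,X_k be i.i.d. real random variables on a finite probability space. Then for any n ≤ k, E[max_{i∈[n]} X_i] ≤ (n/k)·E[max_{i∈[k]} X_i] + E[second-highest of X_1,…,X_k], where second-highest denotes the second largest value among the k samples. -/

import Mathlib

open scoped Classical
open Finset

/-- Indicator that `i` is the unique argmax of `v`, times the max value. -/
noncomputable def gfun (k : ℕ) (i : Fin k) (v : Fin k → ℝ) : ℝ :=
  if ∀ j, j ≠ i → v j < v i then v i else 0

lemma gfun_comp (k : ℕ) (σ : Equiv.Perm (Fin k)) (i : Fin k) (v : Fin k → ℝ) :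
    gfun k i (v ∘ σ) = gfun k (σ i) v := by
  unfold gfun
  have hiff : (∀ j, j ≠ i → v (σ j) < v (σ i)) ↔ (∀ j, j ≠ σ i → v j < v (σ i)) := by
    constructor
    · intro h j hj
      have h1 : σ.symm j ≠ i := by
        intro he
        apply hj
        rw [← he]; simp
      have := h (σ.symm j) h1
      simpa using this
    · intro h j hj
      exact h (σ j) (fun he => hj (σ.injective he))
  simp only [Function.comp]
  by_cases hc : ∀ j, j ≠ σ i → v j < v (σ i)
  · rw [if_pos (hiff.mpr hc), if_pos hc]
  · rw [if_neg (fun h => hc (hiff.mp h)), if_neg hc]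

lemma exchange (k : ℕ) (S : Finset ℝ) (q : ℝ → ℝ) (σ : Equiv.Perm (Fin k))
    (f : (Fin k → ℝ) → ℝ) :
    ∑ v ∈ Fintype.piFinset (fun _ : Fin k => S), (∏ j, q (v j)) * f (v ∘ σ)
      = ∑ v ∈ Fintype.piFinset (fun _ : Fin k => S), (∏ j, q (v j)) * f v := by
  apply Finset.sum_nbij' (i := fun v => v ∘ σ) (j := fun v => v ∘ σ.symm)
  · intro v hv
    simp only [Fintype.mem_piFinset] at hv ⊢
    intro j; exact hv _
  · intro v hv
    simp only [Fintype.mem_piFinset] at hv ⊢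
    intro j; exact hv _
  · intro v _
    funext j; simp
  · intro v _
    funext j; simp
  · intro v _
    have hprod : (∏ j, q (v j)) = ∏ j, q (v (σ j)) :=
      (Equiv.prod_comp σ (fun j => q (v j))).symm
    rw [hprod]
    rfl

/-- For `k` i.i.d. nonnegative random variables (modeled as `k` i.i.d.
draws `v : Fin k → ℝ` from a distribution `q` on a finite set `S` of nonnegative reals)
and any `0 < n ≤ k`,
`E[max_{i∈[n]} v_i] ≤ (n/k)·E[max_{i∈[k]} v_i] + E[second-highest of v]`,
where the second-highest is the largest value of `min (v i) (v j)` over pairs `i ≠ j`. -/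
theorem expected_max_first_n_le (k n : ℕ) (hn : 0 < n) (hnk : n ≤ k)
    (S : Finset ℝ) (hS : S.Nonempty) (hSpos : ∀ x ∈ S, 0 ≤ x)
    (q : ℝ → ℝ) (hq : ∀ x ∈ S, 0 ≤ q x) (hsum : ∑ x ∈ S, q x = 1) :
    ∑ v ∈ Fintype.piFinset (fun _ : Fin k => S),
        (∏ j, q (v j)) *
          (((univ : Finset (Fin k)).filter (fun j : Fin k => j.val < n)).sup'
            (by refine ⟨⟨0, lt_of_lt_of_le hn hnk⟩, ?_⟩; simp [hn]) v)
      ≤ ((n : ℝ) / (k : ℝ)) *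
          ∑ v ∈ Fintype.piFinset (fun _ : Fin k => S),
            (∏ j, q (v j)) *
              ((univ : Finset (Fin k)).sup'
                (by exact ⟨⟨0, lt_of_lt_of_le hn hnk⟩, mem_univ _⟩) v)
        + ∑ v ∈ Fintype.piFinset (fun _ : Fin k => S),
            (∏ j, q (v j)) *
              sSup {x : ℝ | ∃ i j : Fin k, i ≠ j ∧ x = min (v i) (v j)} := by
  have hk : 0 < k := lt_of_lt_of_le hn hnk
  set i0 : Fin k := ⟨0, hk⟩ with hi0def
  set T := Fintype.piFinset (fun _ : Fin k => S) with hT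
  set F : Finset (Fin k) := (univ : Finset (Fin k)).filter (fun j : Fin k => j.val < n)
    with hF
  have hFne : F.Nonempty := ⟨i0, by simp [hF, hi0def, hn]⟩
  have huniv : (univ : Finset (Fin k)).Nonempty := ⟨i0, mem_univ _⟩
  -- abbreviations
  set M : (Fin k → ℝ) → ℝ := fun v => (univ : Finset (Fin k)).sup' huniv v with hM
  set Mn : (Fin k → ℝ) → ℝ := fun v => F.sup' hFne v with hMn
  set SH : (Fin k → ℝ) → ℝ :=
    fun v => sSup {x : ℝ | ∃ i j : Fin k, i ≠ j ∧ x = min (v i) (v j)} with hSH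
  set w : (Fin k → ℝ) → ℝ := fun v => ∏ j, q (v j) with hw
  -- basic facts
  have hvS : ∀ v ∈ T, ∀ j, v j ∈ S := by
    intro v hv j
    rw [hT, Fintype.mem_piFinset] at hv
    exact hv j
  have hwpos : ∀ v ∈ T, 0 ≤ w v := by
    intro v hv
    exact Finset.prod_nonneg fun j _ => hq _ (hvS v hv j)
  have hvnn : ∀ v ∈ T, ∀ j, 0 ≤ v j := fun v hv j => hSpos _ (hvS v hv j)
  have hMnn : ∀ v ∈ T, 0 ≤ M v :=
    fun v hv => le_trans (hvnn v hv i0) (Finset.le_sup' v (mem_univ i0))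
  have hgnn : ∀ v ∈ T, ∀ i, 0 ≤ gfun k i v := by
    intro v hv i
    unfold gfun
    split
    · exact hvnn v hv i
    · exact le_refl 0
  have hbdd : ∀ v : Fin k → ℝ,
      BddAbove {x : ℝ | ∃ i j : Fin k, i ≠ j ∧ x = min (v i) (v j)} := by
    intro v
    refine ⟨M v, ?_⟩
    rintro x ⟨i, j, hij, rfl⟩
    exact le_trans (min_le_left _ _) (Finset.le_sup' v (mem_univ i))
  have hSHnn : ∀ v ∈ T, 0 ≤ SH v := by
    intro v hv
    rcases Nat.lt_or_ge k 2 with h2 | h2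
    · -- k = 1 : the set is empty
      have hempty : {x : ℝ | ∃ i j : Fin k, i ≠ j ∧ x = min (v i) (v j)} = ∅ := by
        ext x
        simp only [Set.mem_setOf_eq, Set.mem_empty_iff_false, iff_false]
        rintro ⟨i, j, hij, _⟩
        exact hij (Fin.ext (by omega))
      rw [hSH]; simp only [hempty, Real.sSup_empty, le_refl]
    · have h01 : (⟨0, hk⟩ : Fin k) ≠ ⟨1, h2⟩ :=
        Fin.ne_of_val_ne (by norm_num)
      have hmem : min (v ⟨0, hk⟩) (v ⟨1, h2⟩) ∈
          {x : ℝ | ∃ i j : Fin k, i ≠ j ∧ x = min (v i) (v j)} :=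
        ⟨⟨0, hk⟩, ⟨1, h2⟩, h01, rfl⟩
      calc (0:ℝ) ≤ min (v ⟨0, hk⟩) (v ⟨1, h2⟩) := le_min (hvnn v hv _) (hvnn v hv _)
        _ ≤ SH v := le_csSup (hbdd v) hmem
  -- pointwise key bound
  have hpoint : ∀ v ∈ T, Mn v ≤ SH v + ∑ i ∈ F, gfun k i v := by
    intro v hv
    by_cases hcase : ∃ i ∈ F, ∀ j, j ≠ i → v j < v i
    · obtain ⟨i, hiF, hi⟩ := hcase
      have h1 : Mn v ≤ v i := by
        apply Finset.sup'_le
        intro j hj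
        by_cases hji : j = i
        · subst hji; exact le_refl _
        · exact (hi j hji).le
      have h2 : gfun k i v = v i := if_pos hi
      have h3 : gfun k i v ≤ ∑ i' ∈ F, gfun k i' v :=
        Finset.single_le_sum (fun i' _ => hgnn v hv i') hiF
      have := le_trans h1 (h2 ▸ h3)
      linarith [hSHnn v hv]
    · push_neg at hcase
      have hzero : ∑ i ∈ F, gfun k i v = 0 := by
        apply Finset.sum_eq_zero
        intro i hi
        unfold gfun
        rw [if_neg]
        intro h
        obtain ⟨j, hj, hle⟩ := hcase i hi
        exact absurd (h j hj) (not_lt.mpr hle)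
      obtain ⟨b, hbF, hb⟩ := Finset.exists_mem_eq_sup' hFne v
      obtain ⟨j, hj, hle⟩ := hcase b hbF
      have hmem : v b ∈ {x : ℝ | ∃ i j : Fin k, i ≠ j ∧ x = min (v i) (v j)} :=
        ⟨b, j, hj.symm, (min_eq_left hle).symm⟩
      have : Mn v ≤ SH v := by
        rw [hMn]; simp only []
        rw [hb]
        exact le_csSup (hbdd v) hmem
      linarith [hzero ▸ le_refl (0:ℝ)]
  -- exchangeability : all E[gfun i] are equal
  set c : ℝ := ∑ v ∈ T, w v * gfun k i0 v with hc
  have hconst : ∀ i : Fin k, ∑ v ∈ T, w v * gfun k i v = c := by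
    intro i
    have hex := exchange k S q (Equiv.swap i0 i) (gfun k i0)
    rw [hc, hT]
    rw [← hex]
    apply Finset.sum_congr rfl
    intro v _
    rw [gfun_comp, Equiv.swap_apply_left]
  -- pointwise : sum of gfun over all indices ≤ M
  have hgsum : ∀ v ∈ T, ∑ i, gfun k i v ≤ M v := by
    intro v hv
    by_cases hcase : ∃ i : Fin k, ∀ j, j ≠ i → v j < v i
    · obtain ⟨i, hi⟩ := hcase
      have : ∑ i', gfun k i' v = gfun k i v := by
        apply Finset.sum_eq_single_of_mem i (mem_univ i)
        intro j _ hji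
        unfold gfun
        rw [if_neg]
        intro h
        exact lt_asymm (h i hji.symm) (hi j hji)
      rw [this]
      unfold gfun
      rw [if_pos hi]
      exact Finset.le_sup' v (mem_univ i)
    · push_neg at hcase
      have : ∑ i', gfun k i' v = 0 := by
        apply Finset.sum_eq_zero
        intro i _
        unfold gfun
        rw [if_neg]
        intro h
        obtain ⟨j, hj, hle⟩ := hcase i
        exact absurd (h j hj) (not_lt.mpr hle)
      rw [this]; exact hMnn v hv
  -- k * c ≤ E[M]
  have hkc : (k : ℝ) * c ≤ ∑ v ∈ T, w v * M v := by
    have h1 : (k : ℝ) * c = ∑ i : Fin k, ∑ v ∈ T, w v * gfun k i v := by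
      rw [Finset.sum_congr rfl (fun i _ => hconst i)]
      simp [mul_comm]
    rw [h1, Finset.sum_comm]
    apply Finset.sum_le_sum
    intro v hv
    rw [← Finset.mul_sum]
    exact mul_le_mul_of_nonneg_left (hgsum v hv) (hwpos v hv)
  -- card of F is n
  have hcard : F.card = n := by
    have h1 : F.card = (Finset.range n).card := by
      apply Finset.card_bij (fun (i : Fin k) _ => (i : ℕ))
      · intro a ha
        simp only [hF, Finset.mem_filter, Finset.mem_univ, true_and] at ha
        simpa using ha
      · intro a _ b _ hab
        exact Fin.ext hab
      · intro b hb
        simp only [Finset.mem_range] at hb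
        exact ⟨⟨b, lt_of_lt_of_le hb hnk⟩, by simp [hF, hb], rfl⟩
    simpa using h1
  -- assemble
  have step1 : ∑ v ∈ T, w v * Mn v ≤ ∑ v ∈ T, w v * (SH v + ∑ i ∈ F, gfun k i v) := by
    apply Finset.sum_le_sum
    intro v hv
    exact mul_le_mul_of_nonneg_left (hpoint v hv) (hwpos v hv)
  have step2 : ∑ v ∈ T, w v * (SH v + ∑ i ∈ F, gfun k i v)
      = (∑ v ∈ T, w v * SH v) + (n : ℝ) * c := by
    simp only [mul_add]
    rw [Finset.sum_add_distrib]
    congr 1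
    have : ∀ v ∈ T, w v * ∑ i ∈ F, gfun k i v = ∑ i ∈ F, w v * gfun k i v := by
      intro v _; rw [Finset.mul_sum]
    rw [Finset.sum_congr rfl this, Finset.sum_comm]
    rw [Finset.sum_congr rfl (fun i _ => hconst i)]
    simp [hcard, mul_comm]
  have step3 : (n : ℝ) * c ≤ ((n : ℝ) / (k : ℝ)) * ∑ v ∈ T, w v * M v := by
    have hkpos : (0:ℝ) < k := by exact_mod_cast hk
    have hnn : (0:ℝ) ≤ (n : ℝ) / (k : ℝ) := by positivity
    calc (n : ℝ) * c = ((n : ℝ) / (k : ℝ)) * ((k : ℝ) * c) := by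
          field_simp
        _ ≤ ((n : ℝ) / (k : ℝ)) * ∑ v ∈ T, w v * M v :=
          mul_le_mul_of_nonneg_left hkc hnn
  calc ∑ v ∈ T, w v * Mn v
      ≤ (∑ v ∈ T, w v * SH v) + (n : ℝ) * c := le_of_le_of_eq step1 step2
    _ ≤ (∑ v ∈ T, w v * SH v) + ((n : ℝ) / (k : ℝ)) * ∑ v ∈ T, w v * M v := by
        linarith
    _ = ((n : ℝ) / (k : ℝ)) * (∑ v ∈ T, w v * M v) + ∑ v ∈ T, w v * SH v := by
        ring
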